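/- Let x_1 < ⋯ < x_d be successive nonzero vectors in c_00, let s_i = min supp(x_i) and t_i = max supp(x_i). If Σ_{i=1}^d c_i e_{s_i} is an (n, ε)-basic special convex combination, then Σ_{i=1}^d c_i e_{t_i} is an (n, 2ε)-basic special convex combination. -/

import Mathlib

/-- `A < B`: every element of `A` is less than every element of `B`. -/
def BlockLt (A B : Finset ℕ) : Prop := ∀ a ∈ A, ∀ b ∈ B, a < b

/-- The Schreier families, defined inductively. -/
def Schreier : ℕ → Set (Finset ℕ)
  | 0 => {F | ∃ i : ℕ, F = {i}}
  | n + 1 => {F | ∃ L : List (Finset ℕ), L ≠ [] ∧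
      (∀ A ∈ L, A ∈ Schreier n) ∧ L.Chain' BlockLt ∧
      (∀ a ∈ L.headI, L.length ≤ a) ∧ F = L.foldr (· ∪ ·) ∅}

/-- The family `S_n ∗ A_3`. -/
def SchreierA3 (n : ℕ) : Set (Finset ℕ) :=
  {F | ∃ L : List (Finset ℕ), L ≠ [] ∧
      (∀ A ∈ L, A.Nonempty ∧ A.card ≤ 3) ∧ L.Chain' BlockLt ∧
      (L.map fun A => sInf (A : Set ℕ)).toFinset ∈ Schreier n ∧
      F = L.foldr (· ∪ ·) ∅}

lemma mem_foldr_union (L : List (Finset ℕ)) (a : ℕ) :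
    a ∈ L.foldr (· ∪ ·) ∅ ↔ ∃ A ∈ L, a ∈ A := by
  induction L with
  | nil => simp
  | cons B T ih => simp [ih]

lemma schreier_nonempty : ∀ {n : ℕ} {F : Finset ℕ}, F ∈ Schreier n → F.Nonempty := by
  intro n
  induction n with
  | zero => rintro F ⟨i, rfl⟩; exact ⟨i, Finset.mem_singleton_self i⟩
  | succ n ih =>
    rintro F ⟨L, hL, hmem, _, _, rfl⟩
    obtain ⟨A, hA⟩ := List.exists_mem_of_ne_nil L hL
    obtain ⟨a, ha⟩ := ih (hmem A hA)
    exact ⟨a, (mem_foldr_union L a).2 ⟨A, hA, ha⟩⟩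

lemma chain_blocklt : ∀ (T : List (Finset ℕ)) (A : Finset ℕ), List.Chain BlockLt A T →
    (∀ B ∈ T, B.Nonempty) → ∀ B ∈ T, BlockLt A B := by
  intro T
  induction T with
  | nil => intro A _ _ B hB; simp at hB
  | cons C T' ih =>
    intro A hc hne B hB
    unfold List.Chain at hc; rw [List.chain_cons] at hc
    rcases List.mem_cons.1 hB with rfl | hB'
    · exact hc.1
    · intro a ha b hb
      obtain ⟨y, hy⟩ := hne C List.mem_cons_self
      exact lt_trans (hc.1 a ha y hy)
        (ih C hc.2 (fun B hB => hne B (List.mem_cons_of_mem _ hB)) B hB' y hy b hb)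

lemma chain'_pairwise : ∀ (L : List (Finset ℕ)), L.Chain' BlockLt →
    (∀ A ∈ L, A.Nonempty) → L.Pairwise BlockLt := by
  intro L
  induction L with
  | nil => intro _ _; exact List.Pairwise.nil
  | cons A T ih =>
    intro hc hne
    have hcT : List.Chain BlockLt A T := hc
    refine List.pairwise_cons.2 ⟨?_, ih hc.tail (fun B hB => hne B (List.mem_cons_of_mem _ hB))⟩
    exact chain_blocklt T A hcT (fun B hB => hne B (List.mem_cons_of_mem _ hB))

lemma len_le_of_mem (L : List (Finset ℕ)) (hc : L.Chain' BlockLt)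
    (hne : ∀ A ∈ L, A.Nonempty) (hhead : ∀ a ∈ L.headI, L.length ≤ a) :
    ∀ A ∈ L, ∀ x ∈ A, L.length ≤ x := by
  match L with
  | [] => intro A hA; simp at hA
  | H :: T =>
    intro A hA x hx
    rcases List.mem_cons.1 hA with rfl | hA'
    · exact hhead x hx
    · obtain ⟨y, hy⟩ := hne H List.mem_cons_self
      have hlt : BlockLt H A :=
        chain_blocklt T H hc (fun B hB => hne B (List.mem_cons_of_mem _ hB)) A hA'
      exact le_of_lt (lt_of_le_of_lt (hhead y hy) (hlt y hy x hx))

lemma singleton_mem_schreier : ∀ (n m : ℕ), 1 ≤ m → ({m} : Finset ℕ) ∈ Schreier n := by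
  intro n
  induction n with
  | zero => intro m _; exact ⟨m, rfl⟩
  | succ n ih =>
    intro m hm
    refine ⟨[{m}], by simp, ?_, by simp [List.Chain'], ?_, by simp⟩
    · intro A hA; simp at hA; subst hA; exact ih m hm
    · intro a ha; simp only [List.headI, Finset.mem_singleton] at ha; subst ha; simpa using hm

lemma one_le_of_mem_schreier (n : ℕ) (F : Finset ℕ) (hF : F ∈ Schreier (n+1)) :
    ∀ a ∈ F, 1 ≤ a := by
  obtain ⟨L, hL, hmem, hchain, hhead, rfl⟩ := hF
  intro a ha
  obtain ⟨A, hA, haA⟩ := (mem_foldr_union L a).1 ha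
  have h1 := len_le_of_mem L hchain (fun B hB => schreier_nonempty (hmem B hB)) hhead A hA a haA
  have h2 : 1 ≤ L.length := List.length_pos_iff.2 hL
  omega

lemma schreier_spread : ∀ (n : ℕ) (F G : Finset ℕ) (g : ℕ → ℕ),
    F ∈ Schreier n → G.Nonempty →
    (∀ b ∈ G, g b ∈ F) → (∀ b ∈ G, g b ≤ b) →
    (∀ b ∈ G, ∀ b' ∈ G, b < b' → g b < g b') →
    G ∈ Schreier n := by
  intro n
  induction n with
  | zero =>
    rintro F G g ⟨i, rfl⟩ ⟨b0, hb0⟩ hmem _ hmono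
    refine ⟨b0, ?_⟩
    ext b
    simp only [Finset.mem_singleton]
    constructor
    · intro hb
      by_contra hne
      have h1 := hmem b hb
      have h2 := hmem b0 hb0
      simp only [Finset.mem_singleton] at h1 h2
      rcases lt_or_gt_of_ne hne with h | h
      · have := hmono b hb b0 hb0 h; omega
      · have := hmono b0 hb0 b hb h; omega
    · rintro rfl; exact hb0
  | succ n ih =>
    rintro F G g ⟨L, hL, hmem, hchain, hhead, rfl⟩ hGne hgF hgle hgmono
    classical
    set f : Finset ℕ → Finset ℕ := fun A => G.filter (fun b => g b ∈ A) with hf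
    set L' : List (Finset ℕ) := (L.map f).filter (fun B => B ≠ ∅) with hL'
    have hLne : ∀ A ∈ L, A.Nonempty := fun A hA => schreier_nonempty (hmem A hA)
    have hpw : L.Pairwise BlockLt := chain'_pairwise L hchain hLne
    -- union of L' is G
    have hunion : G = L'.foldr (· ∪ ·) ∅ := by
      ext b
      rw [mem_foldr_union]
      constructor
      · intro hb
        obtain ⟨A, hA, hgA⟩ := (mem_foldr_union L (g b)).1 (hgF b hb)
        refine ⟨f A, ?_, by simp [hf, hb, hgA]⟩
        rw [hL', List.mem_filter]
        refine ⟨List.mem_map_of_mem hA, ?_⟩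
        simp only [decide_eq_true_eq]
        intro hempty
        have : b ∈ f A := by simp [hf, hb, hgA]
        rw [hempty] at this; simp at this
      · rintro ⟨B, hB, hbB⟩
        rw [hL', List.mem_filter] at hB
        obtain ⟨A, _, rfl⟩ := List.mem_map.1 hB.1
        exact (Finset.mem_filter.1 hbB).1
    -- L' nonempty
    have hL'ne : L' ≠ [] := by
      intro hnil
      obtain ⟨b, hb⟩ := hGne
      have : b ∈ L'.foldr (· ∪ ·) ∅ := hunion ▸ hb
      rw [hnil] at this; simp at this
    -- members of L' are nonempty filters
    have hmemL' : ∀ B ∈ L', ∃ A ∈ L, B = f A ∧ B ≠ ∅ := by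
      intro B hB
      rw [hL', List.mem_filter] at hB
      obtain ⟨A, hA, rfl⟩ := List.mem_map.1 hB.1
      exact ⟨A, hA, rfl, by simpa using hB.2⟩
    refine ⟨L', hL'ne, ?_, ?_, ?_, hunion⟩
    · -- each in Schreier n
      intro B hB
      obtain ⟨A, hA, rfl, hBne⟩ := hmemL' B hB
      refine ih A (f A) g (hmem A hA) (Finset.nonempty_of_ne_empty hBne)
        (fun b hb => (Finset.mem_filter.1 hb).2)
        (fun b hb => hgle b (Finset.mem_filter.1 hb).1)
        (fun b hb b' hb' => hgmono b (Finset.mem_filter.1 hb).1 b' (Finset.mem_filter.1 hb').1)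
    · -- chain'
      have hpw' : (L.map f).Pairwise BlockLt := by
        refine hpw.map f ?_
        intro A B hAB b hb b' hb'
        have hgb : g b ∈ A := (Finset.mem_filter.1 hb).2
        have hgb' : g b' ∈ B := (Finset.mem_filter.1 hb').2
        have h1 : g b < g b' := hAB _ hgb _ hgb'
        by_contra hnb
        push_neg at hnb
        rcases eq_or_lt_of_le hnb with rfl | hlt
        · omega
        · have := hgmono b' (Finset.mem_filter.1 hb').1 b (Finset.mem_filter.1 hb).1 hlt
          omega
      exact (hpw'.sublist List.filter_sublist).isChain
    · -- head condition
      intro a ha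
      have hhd : L'.headI ∈ L' := by
        match L', hL'ne with
        | B :: T, _ => exact List.mem_cons_self
      obtain ⟨A, hA, hBeq, _⟩ := hmemL' L'.headI hhd
      rw [hBeq] at ha
      have hga : g a ∈ A := (Finset.mem_filter.1 ha).2
      have h1 : L.length ≤ g a := len_le_of_mem L hchain hLne hhead A hA (g a) hga
      have h2 : L'.length ≤ L.length := by
        calc L'.length ≤ (L.map f).length := List.length_filter_le _ _
        _ = L.length := List.length_map _
      have h3 := hgle a (Finset.mem_filter.1 ha).1
      omega


/-- `Σ_{i∈F} c i • e i` is an `(n, ε)`-basic special convex combination. -/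
def IsBasicSCC (n : ℕ) (ε : ℝ) (F : Finset ℕ) (c : ℕ → ℝ) : Prop :=
  F ∈ Schreier n ∧ (∀ i ∈ F, 0 ≤ c i) ∧ (∑ i ∈ F, c i) = 1 ∧
    ∀ G ⊆ F, G ∈ Schreier (n - 1) → (∑ i ∈ G, c i) < ε

/-- If `x_1 < ⋯ < x_d` are successive nonzero vectors in `c₀₀`, `s i`/`t i` are the
    minima/maxima of their supports, and `Σ c i e_{s i}` is an `(n,ε)`-basic scc,
    then `Σ c i e_{t i}` is an `(n, 2ε)`-basic scc. -/
theorem stmt_3 (n : ℕ) (ε : ℝ) (d : ℕ) (x : Fin d → (ℕ →₀ ℝ))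
    (hne : ∀ i, (x i).support.Nonempty)
    (hsucc : ∀ i j : Fin d, i < j →
      ∀ a ∈ (x i).support, ∀ b ∈ (x j).support, a < b)
    (c : Fin d → ℝ) (cs ct : ℕ → ℝ)
    (hcs : ∀ i, cs ((x i).support.min' (hne i)) = c i)
    (hct : ∀ i, ct ((x i).support.max' (hne i)) = c i)
    (h : IsBasicSCC n ε
      (Finset.image (fun i => (x i).support.min' (hne i)) Finset.univ) cs) :
    IsBasicSCC n (2 * ε)
      (Finset.image (fun i => (x i).support.max' (hne i)) Finset.univ) ct := by
  classical
  obtain ⟨hFs, hpos, hsum, hsmall⟩ := h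
  set s : Fin d → ℕ := fun i => (x i).support.min' (hne i) with hs_def
  set t : Fin d → ℕ := fun i => (x i).support.max' (hne i) with ht_def
  have hsmem : ∀ i, s i ∈ (x i).support := fun i => Finset.min'_mem _ _
  have htmem : ∀ i, t i ∈ (x i).support := fun i => Finset.max'_mem _ _
  have hst : ∀ i, s i ≤ t i := fun i => Finset.min'_le _ _ (htmem i)
  have hts : ∀ i j : Fin d, i < j → t i < s j :=
    fun i j hij => hsucc i j hij _ (htmem i) _ (hsmem j)
  have hsmono : ∀ i j : Fin d, i < j → s i < s j :=
    fun i j hij => hsucc i j hij _ (hsmem i) _ (hsmem j)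
  have htmono : ∀ i j : Fin d, i < j → t i < t j :=
    fun i j hij => hsucc i j hij _ (htmem i) _ (htmem j)
  have hsinj : Function.Injective s := by
    intro i j hij
    by_contra hne'
    rcases lt_or_gt_of_ne hne' with hl | hl
    · have := hsmono i j hl; omega
    · have := hsmono j i hl; omega
  have htinj : Function.Injective t := by
    intro i j hij
    by_contra hne'
    rcases lt_or_gt_of_ne hne' with hl | hl
    · have := htmono i j hl; omega
    · have := htmono j i hl; omega
  set Fs : Finset ℕ := Finset.image s Finset.univ with hFs_def
  set Ft : Finset ℕ := Finset.image t Finset.univ with hFt_def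
  have hFtne : Ft.Nonempty := by
    obtain ⟨a, ha⟩ := schreier_nonempty hFs
    rw [hFs_def, Finset.mem_image] at ha
    obtain ⟨i, _, _⟩ := ha
    exact ⟨t i, Finset.mem_image.2 ⟨i, Finset.mem_univ i, rfl⟩⟩
  -- the map g sending t i back to s i
  set g : ℕ → ℕ := fun b => if hb : ∃ i : Fin d, t i = b then s hb.choose else 0 with hg_def
  have hg : ∀ i : Fin d, g (t i) = s i := by
    intro i
    have hb : ∃ j : Fin d, t j = t i := ⟨i, rfl⟩
    have : hb.choose = i := htinj hb.choose_spec
    simp only [hg_def, dif_pos hb, this]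
  -- Ft ∈ Schreier n
  have hFt : Ft ∈ Schreier n := by
    refine schreier_spread n Fs Ft g hFs hFtne ?_ ?_ ?_
    · intro b hb
      obtain ⟨i, _, rfl⟩ := Finset.mem_image.1 hb
      rw [hg]
      exact Finset.mem_image.2 ⟨i, Finset.mem_univ i, rfl⟩
    · intro b hb
      obtain ⟨i, _, rfl⟩ := Finset.mem_image.1 hb
      rw [hg]; exact hst i
    · intro b hb b' hb' hlt
      obtain ⟨i, _, rfl⟩ := Finset.mem_image.1 hb
      obtain ⟨j, _, rfl⟩ := Finset.mem_image.1 hb'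
      rw [hg, hg]
      have hij : i < j := by
        by_contra hn
        push_neg at hn
        rcases eq_or_lt_of_le hn with rfl | hl
        · omega
        · have := htmono j i hl; omega
      exact hsmono i j hij
  refine ⟨hFt, ?_, ?_, ?_⟩
  · intro a ha
    obtain ⟨i, _, rfl⟩ := Finset.mem_image.1 ha
    rw [hct i]
    rw [← hcs i]
    exact hpos _ (Finset.mem_image.2 ⟨i, Finset.mem_univ i, rfl⟩)
  · rw [hFt_def, Finset.sum_image (fun i _ j _ hij => htinj hij)]
    rw [hFs_def, Finset.sum_image (fun i _ j _ hij => hsinj hij)] at hsum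
    rw [← hsum]
    exact Finset.sum_congr rfl (fun i _ => by rw [hct i, hcs i])
  · intro G hGsub hGmem
    have hGne : G.Nonempty := schreier_nonempty hGmem
    set I : Finset (Fin d) := Finset.univ.filter (fun i => t i ∈ G) with hI_def
    have hGI : G = I.image t := by
      ext b
      constructor
      · intro hb
        obtain ⟨i, _, rfl⟩ := Finset.mem_image.1 (hGsub hb)
        exact Finset.mem_image.2 ⟨i, Finset.mem_filter.2 ⟨Finset.mem_univ i, hb⟩, rfl⟩
      · intro hb
        obtain ⟨i, hi, rfl⟩ := Finset.mem_image.1 hb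
        exact (Finset.mem_filter.1 hi).2
    have hIne : I.Nonempty := by
      obtain ⟨b, hb⟩ := hGne
      rw [hGI] at hb
      obtain ⟨i, hi, _⟩ := Finset.mem_image.1 hb
      exact ⟨i, hi⟩
    have hsumG : (∑ b ∈ G, ct b) = ∑ i ∈ I, c i := by
      rw [hGI, Finset.sum_image (fun i _ j _ hij => htinj hij)]
      exact Finset.sum_congr rfl (fun i _ => hct i)
    set i₁ : Fin d := I.min' hIne with hi₁_def
    have hi₁I : i₁ ∈ I := Finset.min'_mem _ _
    -- singleton {s i₁} is in Schreier (n-1)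
    have hsFs : ∀ i : Fin d, s i ∈ Fs := fun i => Finset.mem_image.2 ⟨i, Finset.mem_univ i, rfl⟩
    have hsingle : ({s i₁} : Finset ℕ) ∈ Schreier (n - 1) := by
      match n, hFs with
      | 0, _ => exact ⟨s i₁, rfl⟩
      | Nat.succ m, hFs =>
        have h1 : 1 ≤ s i₁ := one_le_of_mem_schreier m Fs hFs _ (hsFs i₁)
        exact singleton_mem_schreier (Nat.succ m - 1) _ h1
    have hci₁ : c i₁ < ε := by
      have := hsmall {s i₁} (Finset.singleton_subset_iff.2 (hsFs i₁)) hsingle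
      rwa [Finset.sum_singleton, hcs i₁] at this
    have hεpos : 0 < ε := lt_of_le_of_lt (by rw [← hcs i₁]; exact hpos _ (hsFs i₁)) hci₁
    set I' : Finset (Fin d) := I.erase i₁ with hI'_def
    have hsplit : (∑ i ∈ I, c i) = c i₁ + ∑ i ∈ I', c i := by
      rw [hI'_def, ← Finset.add_sum_erase I c hi₁I]
    rcases Finset.eq_empty_or_nonempty I' with hI'e | hI'ne
    · rw [hsumG, hsplit, hI'e]
      simp only [Finset.sum_empty, add_zero]
      linarith
    · -- the shift map g' sending s i (i ∈ I') to t (max of I below i)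
      have hfil : ∀ i ∈ I', (I.filter (fun j => j < i)).Nonempty := by
        intro i hi
        refine ⟨i₁, Finset.mem_filter.2 ⟨hi₁I, ?_⟩⟩
        exact lt_of_le_of_ne (Finset.min'_le I i (Finset.mem_of_mem_erase hi))
          (Ne.symm (Finset.ne_of_mem_erase hi))
      set g' : ℕ → ℕ := fun b =>
        if hb : ∃ i : Fin d, i ∈ I' ∧ s i = b then
          t ((I.filter (fun j => j < hb.choose)).max' (hfil _ hb.choose_spec.1)) else 0
        with hg'_def
      have hkey : ∀ i ∈ I', ∃ j ∈ I, j < i ∧ g' (s i) = t j ∧ ∀ j' ∈ I, j' < i → j' ≤ j := by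
        intro i hi
        have hb : ∃ i' : Fin d, i' ∈ I' ∧ s i' = s i := ⟨i, hi, rfl⟩
        have hch : hb.choose = i := hsinj hb.choose_spec.2
        refine ⟨(I.filter (fun j => j < hb.choose)).max' (hfil _ hb.choose_spec.1), ?_, ?_, ?_, ?_⟩
        · exact (Finset.mem_filter.1 (Finset.max'_mem _ _)).1
        · have := (Finset.mem_filter.1 (Finset.max'_mem
            (I.filter (fun j => j < hb.choose)) (hfil _ hb.choose_spec.1))).2
          exact lt_of_lt_of_eq this hch
        · simp only [hg'_def, dif_pos hb]
        · intro j' hj' hlt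
          exact Finset.le_max' _ j' (Finset.mem_filter.2 ⟨hj', by rw [hch]; exact hlt⟩)
      set G' : Finset ℕ := I'.image s with hG'_def
      have hG'mem : ∀ b ∈ G', ∃ i ∈ I', s i = b := fun b hb => by
        obtain ⟨i, hi, rfl⟩ := Finset.mem_image.1 hb; exact ⟨i, hi, rfl⟩
      have hG' : G' ∈ Schreier (n - 1) := by
        refine schreier_spread (n - 1) G G' g' hGmem ⟨s hI'ne.choose, Finset.mem_image.2
          ⟨hI'ne.choose, hI'ne.choose_spec, rfl⟩⟩ ?_ ?_ ?_
        · intro b hb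
          obtain ⟨i, hi, rfl⟩ := hG'mem b hb
          obtain ⟨j, hjI, _, heq, _⟩ := hkey i hi
          rw [heq, hGI]
          exact Finset.mem_image.2 ⟨j, hjI, rfl⟩
        · intro b hb
          obtain ⟨i, hi, rfl⟩ := hG'mem b hb
          obtain ⟨j, _, hji, heq, _⟩ := hkey i hi
          rw [heq]
          exact le_of_lt (hts j i hji)
        · intro b hb b' hb' hlt
          obtain ⟨i, hi, rfl⟩ := hG'mem b hb
          obtain ⟨i', hi', rfl⟩ := hG'mem b' hb'
          obtain ⟨j, hjI, hji, heq, _⟩ := hkey i hi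
          obtain ⟨j', _, _, heq', hmax'⟩ := hkey i' hi'
          rw [heq, heq']
          have hii' : i < i' := by
            by_contra hn
            push_neg at hn
            rcases eq_or_lt_of_le hn with rfl | hl
            · omega
            · have := hsmono i' i hl; omega
          have hij' : i ≤ j' := hmax' i (Finset.mem_of_mem_erase hi) hii'
          exact htmono j j' (lt_of_lt_of_le hji hij')
      have hG'sub : G' ⊆ Fs := by
        intro b hb
        obtain ⟨i, _, rfl⟩ := hG'mem b hb
        exact hsFs i
      have hI'sum : (∑ i ∈ I', c i) < ε := by
        have := hsmall G' hG'sub hG'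
        rw [hG'_def, Finset.sum_image (fun i _ j _ hij => hsinj hij)] at this
        calc (∑ i ∈ I', c i) = ∑ i ∈ I', cs (s i) :=
          Finset.sum_congr rfl (fun i _ => (hcs i).symm)
        _ < ε := this
      rw [hsumG, hsplit]
      linarith
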